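/- arXiv:2205.12553 — 3 statements merged into one kernel-verified Lean document; each statement's English description precedes it below -/
import Mathlib

section
/- Let G be a finite group having property (I_p) with respect to a subgroup H. Then for every subgroup L ≤ G whose order is coprime to p, the permutation module k[G/H] is isomorphic to a direct summand of the permutation module k[G/L]; in particular |L| ≤ |H|, that is, |H| is maximal among the orders of p'-subgroups of G. -/
open Finsupp Representation

section MkHom

variable {k G : Type*} [Field k] [Group G]

/-- `IsScalarTower k (MonoidAlgebra k G)` on `ρ.asModule`. -/
instance asModule_isScalarTower {V : Type*} [AddCommMonoid V] [Module k V]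
    (ρ : Representation k G V) : IsScalarTower k (MonoidAlgebra k G) ρ.asModule :=
  ⟨fun c r x => by
    show ρ.asAlgebraHom (c • r) x = c • ρ.asAlgebraHom r x
    rw [map_smul]
    rfl⟩

/-- Build a `MonoidAlgebra k G`-linear map from an equivariant `k`-linear map. -/
noncomputable def mkHom {V W : Type*} [AddCommMonoid V] [Module k V] [AddCommMonoid W] [Module k W]
    (ρ : Representation k G V) (τ : Representation k G W) (φ : V →ₗ[k] W)
    (hφ : ∀ g x, φ (ρ g x) = τ g (φ x)) : ρ.asModule →ₗ[MonoidAlgebra k G] τ.asModule where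
  toFun := φ
  map_add' := φ.map_add
  map_smul' := fun r x => by
    show φ (ρ.asAlgebraHom r x) = τ.asAlgebraHom r (φ x)
    induction r using MonoidAlgebra.induction_on with
    | of g => simp only [Representation.asAlgebraHom_of]; exact hφ g x
    | add f g hf hg =>
      have h1 : (ρ.asAlgebraHom (f + g)) x = (ρ.asAlgebraHom f) x + (ρ.asAlgebraHom g) x := by
        rw [map_add]; rfl
      have h2 : (τ.asAlgebraHom (f + g)) (φ x) =
          (τ.asAlgebraHom f) (φ x) + (τ.asAlgebraHom g) (φ x) := by
        rw [map_add]; rfl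
      rw [h1, h2, map_add, hf, hg]
    | smul c f hf =>
      have h1 : (ρ.asAlgebraHom (c • f)) x = c • (ρ.asAlgebraHom f) x := by
        rw [map_smul]; rfl
      have h2 : (τ.asAlgebraHom (c • f)) (φ x) = c • (τ.asAlgebraHom f) (φ x) := by
        rw [map_smul]; rfl
      rw [h1, h2, map_smul, hf]

end MkHom

open Finsupp Representation

section Avg

variable {k G : Type*} [Field k] [Group G]

variable (k) in
/-- `gH ↦ ∑_{h ∈ H} ghL`. -/
noncomputable def avgFun (H L : Subgroup G) [Fintype H] : G ⧸ H → (G ⧸ L →₀ k) :=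
  Quotient.lift (fun g => ∑ h : H, Finsupp.single ((g * (h : G) : G) : G ⧸ L) (1 : k))
    (by
      intro a b hab
      have hab' : a⁻¹ * b ∈ H := QuotientGroup.leftRel_apply.mp hab
      refine Fintype.sum_equiv (Equiv.mulLeft ((⟨a⁻¹ * b, hab'⟩ : H)⁻¹)) _ _ fun h => ?_
      congr 2
      simp [mul_assoc])

lemma avgFun_mk (H L : Subgroup G) [Fintype H] (g : G) :
    avgFun k H L (QuotientGroup.mk g) =
      ∑ h : H, Finsupp.single ((g * (h : G) : G) : G ⧸ L) (1 : k) := rfl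

lemma avgFun_smul (H L : Subgroup G) [Fintype H] (g₀ : G) (x : G ⧸ H) :
    avgFun k H L (g₀ • x) = Finsupp.lmapDomain k k (g₀ • ·) (avgFun k H L x) := by
  induction x using Quotient.inductionOn' with
  | h a =>
    have h2 : (Quotient.mk'' a : G ⧸ H) = QuotientGroup.mk a := rfl
    have h1 : g₀ • (QuotientGroup.mk a : G ⧸ H) = QuotientGroup.mk (g₀ * a) := rfl
    rw [h2, h1, avgFun_mk, avgFun_mk, map_sum]
    refine Finset.sum_congr rfl fun h _ => ?_
    rw [Finsupp.lmapDomain_apply, Finsupp.mapDomain_single]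
    simp only [MulAction.Quotient.smul_mk]
    congr 2
    rw [smul_eq_mul, mul_assoc]

variable (k) in
/-- The averaged map `k[G/H] → k[G/L]`, `gH ↦ |H|⁻¹ ∑_{h∈H} ghL`. -/
noncomputable def avgMap (H L : Subgroup G) [Fintype H] :
    MonoidAlgebra k (G ⧸ H) →ₗ[k] MonoidAlgebra k (G ⧸ L) :=
  (MonoidAlgebra.coeffLinearEquiv k).symm.toLinearMap ∘ₗ
    Finsupp.lift _ k _ (fun x => (Fintype.card H : k)⁻¹ • avgFun k H L x) ∘ₗ
    (MonoidAlgebra.coeffLinearEquiv k).toLinearMap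

lemma avgMap_single (H L : Subgroup G) [Fintype H] (x : G ⧸ H) :
    avgMap k H L (MonoidAlgebra.single x 1) =
      (Fintype.card H : k)⁻¹ • MonoidAlgebra.ofCoeff (avgFun k H L x) := by
  simp [avgMap, MonoidAlgebra.coeffLinearEquiv]

lemma single_eq_smul_single_one {X : Type*} (x : X) (r : k) :
    MonoidAlgebra.single x r = r • MonoidAlgebra.single x (1 : k) := by
  rw [← MonoidAlgebra.ofCoeff_single, ← MonoidAlgebra.ofCoeff_single,
    ← MonoidAlgebra.ofCoeff_smul, Finsupp.smul_single_one]

lemma avgMap_equivariant (H L : Subgroup G) [Fintype H] (g : G) (v : MonoidAlgebra k (G ⧸ H)) :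
    avgMap k H L (Representation.ofMulAction k G (G ⧸ H) g v) =
      Representation.ofMulAction k G (G ⧸ L) g (avgMap k H L v) := by
  induction v using MonoidAlgebra.induction_linear with
  | zero => simp only [map_zero]
  | single x r =>
    rw [single_eq_smul_single_one x r]
    simp only [map_smul]
    congr 1
    show avgMap k H L (Representation.ofMulAction k G (G ⧸ H) g (MonoidAlgebra.single x 1)) =
        Representation.ofMulAction k G (G ⧸ L) g (avgMap k H L (MonoidAlgebra.single x 1))
    rw [Representation.ofMulAction_single, avgMap_single, avgMap_single, map_smul, avgFun_smul]
    rfl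
  | add a b ha hb => simp only [map_add, ha, hb]

variable (k) in
/-- Augmentation map. -/
noncomputable def augMap (H : Subgroup G) : MonoidAlgebra k (G ⧸ H) →ₗ[k] k :=
  Finsupp.lift k k _ (fun _ => (1 : k)) ∘ₗ (MonoidAlgebra.coeffLinearEquiv k).toLinearMap

lemma augMap_single (H : Subgroup G) (x : G ⧸ H) (c : k) :
    augMap k H (MonoidAlgebra.single x c) = c := by simp [augMap, MonoidAlgebra.coeffLinearEquiv]

lemma augMap_avgMap (H L : Subgroup G) [Fintype H] (hcard : (Fintype.card H : k) ≠ 0)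
    (v : MonoidAlgebra k (G ⧸ H)) : augMap k L (avgMap k H L v) = augMap k H v := by
  induction v using MonoidAlgebra.induction_linear with
  | zero => simp only [map_zero]
  | add a b ha hb => simp only [map_add, ha, hb]
  | single x r =>
    rw [single_eq_smul_single_one x r]
    simp only [map_smul]
    congr 1
    show augMap k L (avgMap k H L (MonoidAlgebra.single x 1)) = augMap k H (MonoidAlgebra.single x 1)
    induction x using Quotient.inductionOn' with
    | h a =>
      rw [avgMap_single, map_smul, augMap_single]
      show (Fintype.card H : k)⁻¹ • Finsupp.lift k k _ (fun _ => (1 : k))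
        (avgFun k H L (QuotientGroup.mk a)) = _
      rw [avgFun_mk, map_sum]
      simp only [Finsupp.lift_apply, Finsupp.sum_single_index, zero_smul, one_smul]
      rw [Finset.sum_const, Finset.card_univ, nsmul_eq_mul, mul_one, smul_eq_mul,
        inv_mul_cancel₀ hcard]

end Avg

/-- A module is indecomposable if it is nonzero and admits no nontrivial direct sum
decomposition. -/
def IsIndecomposableModule (R M : Type*) [Ring R] [AddCommMonoid M] [Module R M] : Prop :=
  Nontrivial M ∧ ∀ N N' : Submodule R M, IsCompl N N' → N = ⊥ ∨ N' = ⊥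

/-- The permutation module `k[G/H]`, as a module over the group algebra `k[G]`. -/
abbrev PermMod (k : Type*) [Field k] {G : Type*} [Group G] (H : Subgroup G) :=
  (Representation.ofMulAction k G (G ⧸ H)).asModule

/-- A finite group `G` has property `(I_p)` with respect to a subgroup `H` if `H` is a
`p'`-subgroup and the permutation module `k[G/H]` is indecomposable (equivalently, it is the
projective cover of the trivial `k[G]`-module). -/
def HasIp (k : Type*) [Field k] {G : Type*} [Group G] (p : ℕ) (H : Subgroup G) : Prop :=
  ¬ (p ∣ Nat.card H) ∧ IsIndecomposableModule (MonoidAlgebra k G) (PermMod k H)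

set_option maxHeartbeats 2000000 in
/-- If a finite group `G` has property `(I_p)` with respect to `H`, then for every
`p'`-subgroup `L ≤ G` the permutation module `k[G/H]` is a direct summand of `k[G/L]`;
in particular `|L| ≤ |H|`. -/
theorem stmt0 (k : Type) [Field k] (p : ℕ) [Fact p.Prime] [IsAlgClosed k] [CharP k p]
    (G : Type) [Group G] [Finite G] (H : Subgroup G) (hH : HasIp k p H)
    (L : Subgroup G) (hL : ¬ p ∣ Nat.card L) :
    (∃ N N' : Submodule (MonoidAlgebra k G) (PermMod k L),
      IsCompl N N' ∧ Nonempty (N ≃ₗ[MonoidAlgebra k G] PermMod k H)) ∧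
    Nat.card L ≤ Nat.card H := by
  classical
  haveI : Fintype H := Fintype.ofFinite _
  haveI : Fintype L := Fintype.ofFinite _
  haveI : Fintype (G ⧸ H) := Fintype.ofFinite _
  haveI : Fintype (G ⧸ L) := Fintype.ofFinite _
  have hcardH : (Fintype.card H : k) ≠ 0 := by
    rw [Ne, CharP.cast_eq_zero_iff k p]
    simpa [Nat.card_eq_fintype_card] using hH.1
  have hcardL : (Fintype.card L : k) ≠ 0 := by
    rw [Ne, CharP.cast_eq_zero_iff k p]
    simpa [Nat.card_eq_fintype_card] using hL
  let f : PermMod k H →ₗ[MonoidAlgebra k G] PermMod k L :=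
    mkHom _ _ (avgMap k H L) (fun g v => avgMap_equivariant H L g v)
  let g' : PermMod k L →ₗ[MonoidAlgebra k G] PermMod k H :=
    mkHom _ _ (avgMap k L H) (fun g v => avgMap_equivariant L H g v)
  let e : PermMod k H →ₗ[MonoidAlgebra k G] PermMod k H := g' ∘ₗ f
  have haug : ∀ x : PermMod k H, augMap k H (e x) = augMap k H x := fun x => by
    show augMap k H (avgMap k L H (avgMap k H L x)) = augMap k H x
    exact (augMap_avgMap L H hcardL _).trans (augMap_avgMap H L hcardH _)
  have haugpow : ∀ n (x : PermMod k H), augMap k H ((e ^ n) x) = augMap k H x := by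
    intro n
    induction n with
    | zero => intro x; rw [pow_zero]; rfl
    | succ n ih =>
      intro x
      rw [pow_succ, Module.End.mul_apply, ih, haug]
  haveI : Module.Finite k (PermMod k H) :=
    inferInstanceAs (Module.Finite k (MonoidAlgebra k (G ⧸ H)))
  haveI : IsNoetherian k (PermMod k H) :=
    inferInstanceAs (IsNoetherian k (MonoidAlgebra k (G ⧸ H)))
  haveI : IsArtinian k (PermMod k H) :=
    inferInstanceAs (IsArtinian k (MonoidAlgebra k (G ⧸ H)))
  haveI : IsNoetherian (MonoidAlgebra k G) (PermMod k H) :=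
    isNoetherian_of_tower k (inferInstanceAs (IsNoetherian k (PermMod k H)))
  haveI : IsArtinian (MonoidAlgebra k G) (PermMod k H) :=
    @isArtinian_of_tower k (MonoidAlgebra k G) (PermMod k H) _ _ _ _ _ _ _ (inferInstanceAs (IsArtinian k (PermMod k H)))
  obtain ⟨n0, hn0⟩ := Filter.eventually_atTop.mp
    (LinearMap.eventually_isCompl_ker_pow_range_pow (R := MonoidAlgebra k G) (M := PermMod k H) e)
  have hcompl := hn0 (n0 + 1) (Nat.le_succ _)
  set n := n0 + 1 with hn
  -- the basis vector at the trivial coset has augmentation 1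
  have haug1 : augMap k H (MonoidAlgebra.single ((1 : G) : G ⧸ H) (1 : k)) = 1 :=
    augMap_single H _ 1
  rcases hH.2.2 _ _ hcompl with hker | hrange
  · -- `e` is bijective
    have htop : LinearMap.range (e ^ n) = ⊤ := by
      have hc := hcompl.codisjoint
      rw [hker, codisjoint_iff, bot_sup_eq] at hc
      exact hc
    have hpinj : Function.Injective ⇑(e ^ n) := LinearMap.ker_eq_bot.mp hker
    have einj : Function.Injective ⇑e := by
      have hcomp : ⇑(e ^ n) = ⇑(e ^ n0) ∘ ⇑e := by
        funext x; rw [pow_succ, Module.End.mul_apply]; rfl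
      rw [hcomp] at hpinj
      exact hpinj.of_comp
    have esurj : Function.Surjective ⇑e := by
      intro y
      have hy : y ∈ LinearMap.range (e ^ n) := htop ▸ Submodule.mem_top
      obtain ⟨x, hx⟩ := hy
      refine ⟨(e ^ n0) x, ?_⟩
      rw [← hx, hn, pow_succ', Module.End.mul_apply]
    let E : PermMod k H ≃ₗ[MonoidAlgebra k G] PermMod k H :=
      LinearEquiv.ofBijective e ⟨einj, esurj⟩
    let π : PermMod k L →ₗ[MonoidAlgebra k G] PermMod k H := E.symm.toLinearMap ∘ₗ g'
    have hπf : ∀ x, π (f x) = x := fun x => by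
      show E.symm (g' (f x)) = x
      have : g' (f x) = E x := rfl
      rw [this, E.symm_apply_apply]
    have finj : Function.Injective ⇑f := fun a b hab => by
      rw [← hπf a, ← hπf b, hab]
    set N : Submodule (MonoidAlgebra k G) (PermMod k L) := LinearMap.range f with hN
    let proj : PermMod k L →ₗ[MonoidAlgebra k G] N :=
      LinearMap.codRestrict N (f ∘ₗ π) (fun x => LinearMap.mem_range_self _ _)
    have hproj : ∀ x : N, proj x = x := by
      rintro ⟨y, x, rfl⟩
      apply Subtype.ext
      show f (π (f x)) = f x
      rw [hπf]
    have hdis : Disjoint N (LinearMap.ker proj) := by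
      rw [Submodule.disjoint_def]
      intro x hxN hxK
      have h1 := hproj ⟨x, hxN⟩
      rw [LinearMap.mem_ker] at hxK
      have h2 : (⟨x, hxN⟩ : N) = 0 := by rw [← h1]; exact hxK
      exact congrArg Subtype.val h2
    have hcod : Codisjoint N (LinearMap.ker proj) := by
      rw [codisjoint_iff_le_sup]
      intro x _
      refine Submodule.mem_sup.mpr ⟨f (π x), ⟨π x, rfl⟩, x - f (π x), ?_, ?_⟩
      · refine LinearMap.mem_ker.mpr (Subtype.ext ?_)
        show f (π (x - f (π x))) = 0
        rw [map_sub, map_sub, hπf, sub_self]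
      · rw [add_comm]
        exact sub_add_cancel x (f (π x))
    have hIsCompl : IsCompl N (LinearMap.ker proj) := ⟨hdis, hcod⟩
    have eqv : N ≃ₗ[MonoidAlgebra k G] PermMod k H := (LinearEquiv.ofInjective f finj).symm
    refine ⟨⟨N, LinearMap.ker proj, hIsCompl, ⟨eqv⟩⟩, ?_⟩
    -- dimension count, performed with the plain `Finsupp` types
    have havginj : Function.Injective ⇑(avgMap k H L) := finj
    have hfrle : Module.finrank k (MonoidAlgebra k (G ⧸ H)) ≤
        Module.finrank k (MonoidAlgebra k (G ⧸ L)) :=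
      LinearMap.finrank_le_finrank_of_injective havginj
    have hq : Nat.card (G ⧸ H) ≤ Nat.card (G ⧸ L) := by
      rw [Nat.card_eq_fintype_card, Nat.card_eq_fintype_card]
      rw [(MonoidAlgebra.coeffLinearEquiv k).finrank_eq, (MonoidAlgebra.coeffLinearEquiv k).finrank_eq,
        Module.finrank_finsupp_self, Module.finrank_finsupp_self] at hfrle
      exact hfrle
    have e1 : Nat.card (G ⧸ H) * Nat.card H = Nat.card (G ⧸ L) * Nat.card L := by
      rw [← Subgroup.card_eq_card_quotient_mul_card_subgroup,
        ← Subgroup.card_eq_card_quotient_mul_card_subgroup]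
    have hqpos : 0 < Nat.card (G ⧸ H) := Nat.card_pos
    have key : Nat.card L * Nat.card (G ⧸ H) ≤ Nat.card H * Nat.card (G ⧸ H) := by
      calc Nat.card L * Nat.card (G ⧸ H) ≤ Nat.card L * Nat.card (G ⧸ L) :=
            Nat.mul_le_mul_left _ hq
        _ = Nat.card H * Nat.card (G ⧸ H) := by
            rw [mul_comm, e1.symm, mul_comm]
    exact Nat.le_of_mul_le_mul_right key hqpos
  · -- impossible: `e ^ n` would be zero, contradicting augmentation invariance
    exfalso
    have hz : (e ^ n) (MonoidAlgebra.single ((1 : G) : G ⧸ H) (1 : k)) = 0 := by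
      have h0 : e ^ n = 0 := LinearMap.range_eq_bot.mp hrange
      rw [h0]; rfl
    have := haugpow n (MonoidAlgebra.single ((1 : G) : G ⧸ H) (1 : k))
    exact one_ne_zero (haug1.symm.trans (this.symm.trans
      ((congrArg (augMap k H) hz).trans (map_zero (augMap k H)))))
end

section
/- Let G be a finite group and H ≤ G a subgroup with p ∤ |H| and p ∣ |G|. If G acts 2-transitively on the coset space G/H (i.e. G acts transitively on ordered pairs of distinct cosets), then G has property (I_p) with respect to H. -/
set_option linter.unusedSectionVars false

section Aux
variable {k : Type} [Field k] {G : Type} [Group G] [Finite G] {H : Subgroup G}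

/-- The all-ones vector in `k[G/H]`. -/
noncomputable def sA (k : Type) [Field k] {G : Type} [Group G] [Finite G] (H : Subgroup G) :
    (G ⧸ H) →₀ k :=
  Finsupp.equivFunOnFinite.symm fun _ => 1

lemma sA_apply (y : G ⧸ H) : sA k H y = 1 := rfl

/-- View a finitely supported function as an element of the permutation module. -/
noncomputable def toP (v : (G ⧸ H) →₀ k) : PermMod k H := MonoidAlgebra.ofCoeff v

/-- The coefficients of an element of the permutation module. -/
noncomputable def ofP (x : PermMod k H) : (G ⧸ H) →₀ k :=
  MonoidAlgebra.coeff (show MonoidAlgebra k (G ⧸ H) from x)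

lemma toP_ofP (x : PermMod k H) : toP (ofP x) = x := rfl

/-- The permutation action on coefficients. -/
noncomputable def rho (H : Subgroup G) (g : G) : ((G ⧸ H) →₀ k) →ₗ[k] ((G ⧸ H) →₀ k) :=
  Finsupp.lmapDomain k k (g • ·)

lemma rho_apply (g : G) (w : (G ⧸ H) →₀ k) (y : G ⧸ H) : rho H g w y = w (g⁻¹ • y) := by
  conv_lhs => rw [← smul_inv_smul g y]
  exact Finsupp.mapDomain_apply (MulAction.injective g) _ _

lemma rho_single (g : G) (x : G ⧸ H) (c : k) :
    rho H g (Finsupp.single x c) = Finsupp.single (g • x) c := by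
  simp [rho]

/-- The augmentation map. -/
noncomputable def eA (k : Type) [Field k] {G : Type} [Group G] (H : Subgroup G) :
    ((G ⧸ H) →₀ k) →ₗ[k] k := Finsupp.lsum k fun _ => LinearMap.id

lemma eA_single (x : G ⧸ H) (c : k) : eA k H (Finsupp.single x c) = c := by
  simp [eA]

lemma rho_sA (g : G) :
    rho H g (sA k H) = sA k H := by
  ext y
  rw [rho_apply]
  rfl

lemma eA_sA : eA k H (sA k H) = (Nat.card (G ⧸ H) : k) := by
  classical
  haveI : Fintype (G ⧸ H) := Fintype.ofFinite _
  have hs : (sA k H (G := G)).support = Finset.univ := by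
    ext y; simp [Finsupp.mem_support_iff, sA_apply]
  show ((sA k H (G := G)).sum fun _ c => c) = _
  rw [Finsupp.sum, hs]
  simp [sA_apply, Nat.card_eq_fintype_card]

lemma single_smul' (g : G) (x : PermMod k H) :
    ofP ((MonoidAlgebra.single g (1:k)) • x) = rho H g (ofP x) := by
  show ofP ((Representation.ofMulAction k G (G ⧸ H)).asAlgebraHom (MonoidAlgebra.single g 1) x) = _
  rw [Representation.asAlgebraHom_single_one, Representation.ofMulAction_def]
  rfl

lemma single_smul (g : G) (v : (G ⧸ H) →₀ k) :
    (MonoidAlgebra.single g (1:k)) • toP v = toP (rho H g v) :=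
  congrArg toP (single_smul' g (toP v))

lemma const_smul' (c : k) (x : PermMod k H) :
    ofP ((MonoidAlgebra.single (1:G) c) • x) = c • ofP x := by
  show ofP ((Representation.ofMulAction k G (G ⧸ H)).asAlgebraHom (MonoidAlgebra.single 1 c) x) = _
  rw [Representation.asAlgebraHom_single, map_one]
  rfl

lemma const_smul (c : k) (v : (G ⧸ H) →₀ k) :
    (MonoidAlgebra.single (1:G) c) • toP v = toP (c • v) :=
  congrArg toP (const_smul' c (toP v))

lemma phi_equiv (φ : PermMod k H →ₗ[MonoidAlgebra k G] PermMod k H) (g : G)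
    (v : (G ⧸ H) →₀ k) :
    ofP (φ (toP (rho H g v))) =
      rho H g (ofP (φ (toP v))) := by
  have h := φ.map_smul (MonoidAlgebra.single g (1:k)) (toP v)
  rw [single_smul] at h
  rw [h, single_smul']

lemma phi_const (φ : PermMod k H →ₗ[MonoidAlgebra k G] PermMod k H) (c : k)
    (v : (G ⧸ H) →₀ k) :
    ofP (φ (toP (c • v))) =
      c • ofP (φ (toP v)) := by
  have h := φ.map_smul (MonoidAlgebra.single (1:G) c) (toP v)
  rw [const_smul] at h
  rw [h, const_smul']

lemma phi_add (φ : PermMod k H →ₗ[MonoidAlgebra k G] PermMod k H)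
    (u v : (G ⧸ H) →₀ k) :
    ofP (φ (toP (u + v))) =
      ofP (φ (toP u)) +
        ofP (φ (toP v)) :=
  congrArg ofP (φ.map_add (toP u) (toP v))

/-- Any `k[G]`-endomorphism of a 2-transitive permutation module is a combination of the
identity and the "all-ones" endomorphism. -/
lemma key (h2 : ∀ a b c d : G ⧸ H, a ≠ b → c ≠ d → ∃ g : G, g • a = c ∧ g • b = d)
    (hnt : Nontrivial (G ⧸ H))
    (φ : PermMod k H →ₗ[MonoidAlgebra k G] PermMod k H) :
    ∃ a b : k, ∀ v : (G ⧸ H) →₀ k,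
      ofP (φ (toP v)) = a • v + (b * eA k H v) • sA k H := by
  classical
  set x₀ : G ⧸ H := ((1 : G) : G ⧸ H) with hx₀
  obtain ⟨y₁, hy₁⟩ := exists_ne x₀
  set δ : (G ⧸ H) →₀ k := Finsupp.single x₀ 1 with hδdef
  set w : (G ⧸ H) →₀ k := ofP (φ (toP δ)) with hw
  have hwy : ∀ y, y ≠ x₀ → w y = w y₁ := by
    intro y hy
    obtain ⟨g, hg1, hg2⟩ := h2 x₀ y x₀ y₁ (Ne.symm hy) (Ne.symm hy₁)
    have hδg : rho H g δ = δ := by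
      rw [hδdef, rho_single, hg1]
    have hwg : rho H g w = w := by
      rw [hw, ← phi_equiv φ g δ, hδg]
    have h3 : (rho H g w) y₁ = w y₁ := by rw [hwg]
    rw [rho_apply] at h3
    have h4 : g⁻¹ • y₁ = y := by rw [inv_smul_eq_iff]; exact hg2.symm
    rw [h4] at h3
    exact h3
  have hwform : w = (w x₀ - w y₁) • δ + w y₁ • sA k H := by
    ext y
    by_cases hy : y = x₀
    · subst hy
      simp [hδdef, Finsupp.single_apply, sA_apply]
    · simp [hδdef, Finsupp.single_apply, Ne.symm hy, sA_apply, hwy y hy]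
  obtain ⟨a, b, hab⟩ : ∃ a b : k, w = a • δ + b • sA k H := ⟨w x₀ - w y₁, w y₁, hwform⟩
  refine ⟨a, b, ?_⟩
  intro v
  induction v using Finsupp.induction with
  | zero => simp [show ofP (φ (toP (0 : (G ⧸ H) →₀ k))) = 0
      from congrArg ofP φ.map_zero]
  | single_add x c f hxf hc ih =>
    rw [phi_add, ih, map_add, eA_single]
    have hsingle : ofP (φ (toP (Finsupp.single x c))) =
        a • Finsupp.single x c + (b * c) • sA k H := by
      obtain ⟨g, rfl⟩ := QuotientGroup.mk_surjective x
      have hgx : g • x₀ = ((g : G) : G ⧸ H) := by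
        rw [hx₀, MulAction.Quotient.smul_mk, smul_eq_mul, mul_one]
      have hρgδ : rho H g δ = Finsupp.single ((g : G) : G ⧸ H) 1 := by
        rw [hδdef, rho_single, hgx]
      have h1 : (Finsupp.single ((g : G) : G ⧸ H) c : (G ⧸ H) →₀ k) =
          c • (Finsupp.single ((g : G) : G ⧸ H) (1:k)) := by
        rw [Finsupp.smul_single, smul_eq_mul, mul_one]
      rw [h1, ← hρgδ, phi_const, phi_equiv, ← hw, hab, map_add, map_smul, map_smul,
        rho_sA, hρgδ]
      module
    rw [hsingle]
    module

lemma eA_sA_zero (p : ℕ) [Fact p.Prime] [CharP k p] (hdvd : p ∣ Nat.card (G ⧸ H)) :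
    eA k H (sA k H) = 0 := by
  rw [eA_sA]
  exact_mod_cast (CharP.cast_eq_zero_iff k p _).2 hdvd

end Aux

/-- If `p ∤ |H|`, `p ∣ |G|` and `G` acts 2-transitively on `G/H`, then `G` has property
`(I_p)` with respect to `H`. -/
theorem stmt1 (k : Type) [Field k] (p : ℕ) [Fact p.Prime] [IsAlgClosed k] [CharP k p]
    (G : Type) [Group G] [Finite G] (H : Subgroup G)
    (hH : ¬ p ∣ Nat.card H) (hG : p ∣ Nat.card G)
    (h2 : ∀ a b c d : G ⧸ H, a ≠ b → c ≠ d → ∃ g : G, g • a = c ∧ g • b = d) :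
    HasIp k p H := by
  classical
  have hfact : p.Prime := Fact.out
  have hdvd : p ∣ Nat.card (G ⧸ H) := by
    have hcard := Subgroup.card_eq_card_quotient_mul_card_subgroup H
    rcases (Nat.Prime.dvd_mul hfact).1 (hcard ▸ hG) with h | h
    · exact h
    · exact absurd h hH
  have hlt : 1 < Nat.card (G ⧸ H) :=
    lt_of_lt_of_le hfact.one_lt (Nat.le_of_dvd Nat.card_pos hdvd)
  have hnt : Nontrivial (G ⧸ H) := Finite.one_lt_card_iff_nontrivial.mp hlt
  obtain ⟨y₁, hy₁⟩ := exists_ne (((1 : G) : G ⧸ H))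
  have hεs : eA k H (sA k H) = 0 := eA_sA_zero p hdvd
  refine ⟨hH, ?_, ?_⟩
  · refine ⟨toP (Finsupp.single ((1:G) : G ⧸ H) 1), 0, ?_⟩
    intro h
    have h' : (Finsupp.single ((1:G) : G ⧸ H) (1:k)) = 0 := congrArg ofP h
    exact one_ne_zero (α := k) (by simpa using DFunLike.congr_fun h' ((1:G) : G ⧸ H))
  · intro N N' hc
    set e : PermMod k H →ₗ[MonoidAlgebra k G] PermMod k H :=
      N.subtype ∘ₗ (Submodule.projectionOnto (R := MonoidAlgebra k G) (E := PermMod k H) N N' hc) with he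
    have heN : ∀ x : PermMod k H, x ∈ N → e x = x := fun x hx => by
      show N.subtype (Submodule.projectionOnto N N' hc x) = x
      rw [Submodule.projectionOnto_apply_of_mem_left hc hx]; rfl
    have heN' : ∀ x : PermMod k H, x ∈ N' → e x = 0 := fun x hx => by
      show N.subtype (Submodule.projectionOnto N N' hc x) = 0
      rw [Submodule.projectionOnto_apply_of_mem_right hc hx, map_zero]
    obtain ⟨a, b, hab⟩ := key h2 hnt e
    set δ : (G ⧸ H) →₀ k := Finsupp.single ((1:G) : G ⧸ H) 1 with hδ
    set s : (G ⧸ H) →₀ k := sA k H with hs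
    have h1 : ofP (e (toP δ)) = a • δ + b • s := by
      rw [hab δ, hδ, eA_single, mul_one]
    have heA1 : eA k H (a • δ + b • s) = a := by
      rw [map_add, map_smul, map_smul, hδ, eA_single, hs, hεs]
      simp
    have hmem : toP ((a • δ + b • s : (G ⧸ H) →₀ k)) ∈ N := by
      rw [← h1]
      exact Submodule.coe_mem (Submodule.projectionOnto (R := MonoidAlgebra k G)
        (E := PermMod k H) N N' hc (toP δ))
    have hidem := heN _ hmem
    have hidem' := hab (a • δ + b • s)
    rw [heA1] at hidem'
    have h3 : a • (a • δ + b • s) + (b * a) • s = a • δ + b • s :=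
      hidem'.symm.trans (congrArg ofP hidem)
    have e1 : a * b + b * a = b := by
      have := DFunLike.congr_fun h3 y₁
      simpa [hδ, hs, Finsupp.single_apply, Ne.symm hy₁, sA_apply, mul_comm] using this
    have e2 : a * a + a * b + b * a = a + b := by
      have := DFunLike.congr_fun h3 (((1 : G) : G ⧸ H))
      simpa [hδ, hs, Finsupp.single_apply, sA_apply] using this
    have ha2 : a * a = a := by linear_combination e2 - e1
    rcases mul_eq_zero.mp (show a * (a - 1) = 0 by linear_combination ha2) with ha | ha'
    · left
      rw [eq_bot_iff]
      intro x hx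
      have hx1 : ofP x = (b * eA k H (ofP x)) • s := by
        have := hab (ofP x)
        rw [toP_ofP, heN x hx, ha, zero_smul, zero_add] at this
        exact this
      have hε : eA k H (ofP x) = 0 := by
        rw [hx1, map_smul, hs, hεs, smul_zero]
      have : ofP x = 0 := by rw [hx1, hε, mul_zero, zero_smul]
      exact (Submodule.mem_bot _).mpr (congrArg toP this)
    · right
      have ha : a = 1 := by linear_combination ha'
      rw [eq_bot_iff]
      intro x hx
      have hx1 : (0 : (G ⧸ H) →₀ k) =
          ofP x + (b * eA k H (ofP x)) • s := by
        have := hab (ofP x)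
        rw [toP_ofP, heN' x hx, ha, one_smul] at this
        exact this
      have hx2 : ofP x =
          -((b * eA k H (ofP x)) • s) :=
        eq_neg_of_add_eq_zero_left hx1.symm
      have hε : eA k H (ofP x) = 0 := by
        rw [hx2, map_neg, map_smul, hs, hεs, smul_zero, neg_zero]
      have hx0 : ofP x = 0 := by
        rw [hx2, hε, mul_zero, zero_smul, neg_zero]
      exact (Submodule.mem_bot _).mpr (congrArg toP hx0)
end

section
/- Let G be a finite group and H ≤ L ≤ G subgroups. If G has property (I_p) with respect to H, then L has property (I_p) with respect to H. -/
/-- Identity map viewing an element of the permutation module as a finitely supported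
function. -/
def PermMod.toFinsupp {k : Type} [Field k] {G : Type} [Group G] {H : Subgroup G}
    (x : PermMod k H) : (G ⧸ H) →₀ k := MonoidAlgebra.coeff (x : MonoidAlgebra k (G ⧸ H))

/-- Identity map in the other direction. -/
def PermMod.ofFinsupp {k : Type} [Field k] {G : Type} [Group G] {H : Subgroup G}
    (x : (G ⧸ H) →₀ k) : PermMod k H := (MonoidAlgebra.ofCoeff x : MonoidAlgebra k (G ⧸ H))

section aux
variable {G : Type} [Group G] (H L : Subgroup G)

def eMap : (L ⧸ H.subgroupOf L) → G ⧸ H :=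
  Quotient.map' Subtype.val (fun a b hab => by
    rw [QuotientGroup.leftRel_apply] at *
    exact hab)

theorem eMap_mk (a : L) : eMap H L (QuotientGroup.mk a) = QuotientGroup.mk (a : G) := rfl

theorem eMap_injective : Function.Injective (eMap H L) := by
  intro x y
  induction x using Quotient.inductionOn' with
  | h a =>
  induction y using Quotient.inductionOn' with
  | h b =>
  intro h
  have : ((a : G) : G ⧸ H) = ((b : G) : G ⧸ H) := h
  rw [QuotientGroup.eq] at this ⊢
  simpa [Subgroup.mem_subgroupOf] using this

theorem eMap_smul (l : L) (q : L ⧸ H.subgroupOf L) :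
    eMap H L (l • q) = (l : G) • eMap H L q := by
  induction q using Quotient.inductionOn' with
  | h a =>
    show eMap H L (l • (QuotientGroup.mk a)) = _
    rw [MulAction.Quotient.smul_mk, eMap_mk, eMap_mk, MulAction.Quotient.smul_mk]
    rfl

variable {H L} in
theorem smul_eMap_notin_range (hHL : H ≤ L) {g : G} (hg : g ∉ L)
    (q : L ⧸ H.subgroupOf L) : g • eMap H L q ∉ Set.range (eMap H L) := by
  induction q using Quotient.inductionOn' with
  | h a =>
  rintro ⟨q', hq'⟩
  induction q' using Quotient.inductionOn' with
  | h b =>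
  rw [eMap_mk, eMap_mk, MulAction.Quotient.smul_mk] at hq'
  rw [QuotientGroup.eq] at hq'
  have : ((b : G)⁻¹ * (g * a) : G) ∈ L := hHL hq'
  have := L.mul_mem (L.mul_mem b.2 this) (L.inv_mem a.2)
  rw [mul_inv_cancel_left, mul_assoc, mul_inv_cancel, mul_one] at this
  exact hg this

variable (k : Type) [Field k]

/-- `ι : k[L/H'] → k[G/H]`, `k`-linear. -/
noncomputable def iota : PermMod k (H.subgroupOf L) →ₗ[k] PermMod k H :=
  (MonoidAlgebra.coeffLinearEquiv k).symm.toLinearMap ∘ₗ Finsupp.lmapDomain k k (eMap H L) ∘ₗ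
    (MonoidAlgebra.coeffLinearEquiv k).toLinearMap

theorem eMap_smul_injective (g : G) : Function.Injective (fun q => g • eMap H L q) :=
  (MulAction.injective g).comp (eMap_injective H L)

/-- `τ g : k[G/H] → k[L/H']`, restriction to the fiber `g•L` translated back, `k`-linear. -/
noncomputable def tau (g : G) : PermMod k H →ₗ[k] PermMod k (H.subgroupOf L) :=
  (MonoidAlgebra.coeffLinearEquiv k).symm.toLinearMap ∘ₗ
    Finsupp.lcomapDomain (fun q => g • eMap H L q) (eMap_smul_injective H L g) ∘ₗ
    (MonoidAlgebra.coeffLinearEquiv k).toLinearMap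

theorem tau_apply (g : G) (x : PermMod k H) (q : L ⧸ H.subgroupOf L) :
    (tau H L k g x).toFinsupp q = x.toFinsupp (g • eMap H L q) := rfl

theorem iota_apply_eMap (y : PermMod k (H.subgroupOf L)) (q : L ⧸ H.subgroupOf L) :
    (iota H L k y).toFinsupp (eMap H L q) = y.toFinsupp q :=
  Finsupp.mapDomain_apply (eMap_injective H L) y.toFinsupp q

theorem iota_injective : Function.Injective (iota H L k) :=
  fun a b hab => MonoidAlgebra.coeff_injective
    (Finsupp.mapDomain_injective (eMap_injective H L) (congrArg MonoidAlgebra.coeff hab))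

end aux

section act
variable {k : Type} [Field k] {G : Type} [Group G] {H L : Subgroup G}

theorem PermMod.ext' {x y : PermMod k H} (h : ∀ q, x.toFinsupp q = y.toFinsupp q) : x = y :=
  MonoidAlgebra.coeff_injective (Finsupp.ext h)

theorem PermMod.single_one_smul (g : G) (x : PermMod k H) :
    (MonoidAlgebra.single g (1 : k)) • x
      = PermMod.ofFinsupp
          ((Representation.ofMulAction k G (G ⧸ H) g (MonoidAlgebra.ofCoeff x.toFinsupp)).coeff) := by
  show (Representation.ofMulAction k G (G ⧸ H)).asAlgebraHom (MonoidAlgebra.single g 1)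
      (x : MonoidAlgebra k (G ⧸ H)) = _
  rw [Representation.asAlgebraHom_single_one]
  rfl

theorem PermMod.algebraMap_smul' (c : k) (x : PermMod k H) :
    (algebraMap k (MonoidAlgebra k G) c) • x = c • x := by
  show (Representation.ofMulAction k G (G ⧸ H)).asAlgebraHom
      (algebraMap k (MonoidAlgebra k G) c) (x : MonoidAlgebra k (G ⧸ H)) = _
  rw [AlgHom.commutes]
  rfl

theorem PermMod.smul_smul_assoc (r : k) (f : MonoidAlgebra k G) (x : PermMod k H) :
    (r • f) • x = r • (f • x) := by
  show (Representation.ofMulAction k G (G ⧸ H)).asAlgebraHom (r • f) (x : MonoidAlgebra k (G ⧸ H))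
      = r • ((Representation.ofMulAction k G (G ⧸ H)).asAlgebraHom f (x : MonoidAlgebra k (G ⧸ H)))
  rw [map_smul]
  rfl

theorem tau_single_smul (h g : G) (x : PermMod k H) :
    tau H L k g ((MonoidAlgebra.single h (1 : k)) • x) = tau H L k (h⁻¹ * g) x := by
  rw [PermMod.single_one_smul]
  apply PermMod.ext'
  intro q
  rw [tau_apply, tau_apply]
  show ((Representation.ofMulAction k G (G ⧸ H)) h (MonoidAlgebra.ofCoeff x.toFinsupp)).coeff (g • eMap H L q) = _
  rw [Representation.ofMulAction_apply, smul_smul]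

theorem tau_iota_coe (l : L) (y : PermMod k (H.subgroupOf L)) :
    tau H L k (l : G) (iota H L k y) = (MonoidAlgebra.single (l⁻¹ : L) (1 : k)) • y := by
  rw [PermMod.single_one_smul]
  apply PermMod.ext'
  intro q
  rw [tau_apply]
  show _ = ((Representation.ofMulAction k L (L ⧸ H.subgroupOf L)) l⁻¹ (MonoidAlgebra.ofCoeff y.toFinsupp)).coeff q
  rw [Representation.ofMulAction_apply, inv_inv, ← eMap_smul, iota_apply_eMap]

theorem tau_iota_not_mem (hHL : H ≤ L) {g : G} (hg : g ∉ L) (y : PermMod k (H.subgroupOf L)) :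
    tau H L k g (iota H L k y) = 0 := by
  apply PermMod.ext'
  intro q
  rw [tau_apply]
  show (iota H L k y).toFinsupp (g • eMap H L q) = 0
  exact Finsupp.mapDomain_notin_range _ _ (smul_eMap_notin_range hHL hg q)

theorem eq_zero_of_tau_eq_zero {x : PermMod k H} (h : ∀ g : G, tau H L k g x = 0) : x = 0 := by
  apply PermMod.ext'
  intro q
  induction q using Quotient.inductionOn' with
  | h a =>
  have h1 : (tau H L k a x).toFinsupp (QuotientGroup.mk (1 : L)) = 0 := by rw [h a]; rfl
  rw [tau_apply] at h1
  have : a • eMap H L (QuotientGroup.mk (1 : L)) = Quotient.mk'' a := by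
    rw [eMap_mk]
    show a • (QuotientGroup.mk (1 : G)) = _
    rw [MulAction.Quotient.smul_mk]
    show QuotientGroup.mk (a * 1) = _
    rw [mul_one]
  rw [this] at h1
  exact h1

end act

section ind
variable {k : Type} [Field k] {G : Type} [Group G] {H L : Subgroup G}

theorem Submodule.ksmul_mem (N : Submodule (MonoidAlgebra k L) (PermMod k (H.subgroupOf L)))
    (c : k) {y : PermMod k (H.subgroupOf L)} (hy : y ∈ N) : c • y ∈ N := by
  rw [← PermMod.algebraMap_smul']
  exact N.smul_mem _ hy

/-- The induced submodule of `k[G/H]` attached to a `k[L]`-submodule of `k[L/H']`. -/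
noncomputable def indSub (N : Submodule (MonoidAlgebra k L) (PermMod k (H.subgroupOf L))) :
    Submodule (MonoidAlgebra k G) (PermMod k H) where
  carrier := {x | ∀ g : G, tau H L k g x ∈ N}
  zero_mem' := fun g => by rw [map_zero]; exact N.zero_mem
  add_mem' := fun hx hy g => by rw [map_add]; exact N.add_mem (hx g) (hy g)
  smul_mem' := by
    intro r x hx
    induction r using MonoidAlgebra.induction_on with
    | of h =>
      intro g
      rw [MonoidAlgebra.of_apply, tau_single_smul]
      exact hx _
    | add f f' hf hf' =>
      intro g
      rw [add_smul, map_add]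
      exact N.add_mem (hf g) (hf' g)
    | smul c f hf =>
      intro g
      rw [PermMod.smul_smul_assoc, map_smul]
      exact Submodule.ksmul_mem N c (hf g)

theorem mem_indSub {N : Submodule (MonoidAlgebra k L) (PermMod k (H.subgroupOf L))}
    {x : PermMod k H} : x ∈ indSub N ↔ ∀ g : G, tau H L k g x ∈ N := Iff.rfl

theorem iota_mem_indSub (hHL : H ≤ L)
    {N : Submodule (MonoidAlgebra k L) (PermMod k (H.subgroupOf L))}
    {y : PermMod k (H.subgroupOf L)} (hy : y ∈ N) : iota H L k y ∈ indSub N := by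
  intro g
  by_cases hg : g ∈ L
  · rw [show g = ((⟨g, hg⟩ : L) : G) from rfl, tau_iota_coe]
    exact N.smul_mem _ hy
  · rw [tau_iota_not_mem hHL hg]
    exact N.zero_mem

theorem indSub_ne_bot (hHL : H ≤ L)
    {N : Submodule (MonoidAlgebra k L) (PermMod k (H.subgroupOf L))} (hN : N ≠ ⊥) :
    indSub (k := k) (G := G) N ≠ ⊥ := by
  obtain ⟨y, hyN, hy0⟩ := Submodule.exists_mem_ne_zero_of_ne_bot hN
  intro hbot
  have : iota H L k y ∈ indSub N := iota_mem_indSub hHL hyN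
  rw [hbot, Submodule.mem_bot] at this
  exact hy0 (by
    have := iota_injective H L k (a₁ := y) (a₂ := 0) (by rw [this, map_zero])
    exact this)

end ind

section main
variable {k : Type} [Field k] {G : Type} [Group G] {H L : Subgroup G}

theorem single_eq_smul_iota (a : G) (c : k) :
    PermMod.ofFinsupp (Finsupp.single (QuotientGroup.mk a : G ⧸ H) c)
      = (MonoidAlgebra.single a (1 : k)) •
          iota H L k (PermMod.ofFinsupp (Finsupp.single (QuotientGroup.mk (1 : L)) c)) := by
  rw [PermMod.single_one_smul]
  show MonoidAlgebra.single (QuotientGroup.mk a : G ⧸ H) c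
      = (Representation.ofMulAction k G (G ⧸ H)) a
          (MonoidAlgebra.ofCoeff (Finsupp.mapDomain (eMap H L) (Finsupp.single (QuotientGroup.mk (1 : L)) c)))
  rw [Finsupp.mapDomain_single, eMap_mk]
  show _ = (Representation.ofMulAction k G (G ⧸ H)) a (MonoidAlgebra.single _ c)
  rw [Representation.ofMulAction_single]
  congr 1
  show _ = a • (QuotientGroup.mk ((1 : L) : G))
  rw [OneMemClass.coe_one, MulAction.Quotient.smul_mk]
  show (QuotientGroup.mk a : G ⧸ H) = QuotientGroup.mk (a * 1)
  rw [mul_one]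

theorem indSub_sup_eq_top (hHL : H ≤ L)
    {N N' : Submodule (MonoidAlgebra k L) (PermMod k (H.subgroupOf L))}
    (h : N ⊔ N' = ⊤) : indSub N ⊔ indSub N' = (⊤ : Submodule (MonoidAlgebra k G) _) := by
  rw [eq_top_iff]
  rintro x -
  have hx : x = x.toFinsupp.sum (fun p c => PermMod.ofFinsupp (Finsupp.single p c)) :=
    ((congrArg (fun f => PermMod.ofFinsupp (H := H) f) (Finsupp.sum_single x.toFinsupp)).symm.trans
      (map_finsuppSum (MonoidAlgebra.coeffAddEquiv (R := k) (M := G ⧸ H)).symm _ _))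
  rw [hx]
  apply Submodule.finsuppSum_mem
  intro p hp
  induction p using Quotient.inductionOn' with
  | h a =>
  set c := x.toFinsupp (Quotient.mk'' a) with hc
  have hmem : PermMod.ofFinsupp (Finsupp.single (QuotientGroup.mk (1 : L)) c) ∈ N ⊔ N' := by
    rw [h]; trivial
  obtain ⟨n, hn, n', hn', hsum⟩ := Submodule.mem_sup.mp hmem
  have : PermMod.ofFinsupp (Finsupp.single (Quotient.mk'' a : G ⧸ H) c)
      = (MonoidAlgebra.single a (1 : k)) • iota H L k n
        + (MonoidAlgebra.single a (1 : k)) • iota H L k n' := by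
    rw [← smul_add, ← map_add, hsum]
    exact single_eq_smul_iota a c
  rw [this]
  exact Submodule.add_mem _
    (Submodule.mem_sup_left ((indSub N).smul_mem _ (iota_mem_indSub hHL hn)))
    (Submodule.mem_sup_right ((indSub N').smul_mem _ (iota_mem_indSub hHL hn')))

theorem indSub_inf_eq_bot
    {N N' : Submodule (MonoidAlgebra k L) (PermMod k (H.subgroupOf L))}
    (h : N ⊓ N' = ⊥) : indSub N ⊓ indSub N' = (⊥ : Submodule (MonoidAlgebra k G) _) := by
  rw [eq_bot_iff]
  intro x hx
  rw [Submodule.mem_inf] at hx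
  rw [Submodule.mem_bot]
  apply eq_zero_of_tau_eq_zero (L := L)
  intro g
  have : tau H L k g x ∈ N ⊓ N' := ⟨hx.1 g, hx.2 g⟩
  rw [h, Submodule.mem_bot] at this
  exact this

end main

theorem stmt2' (k : Type) [Field k] (p : ℕ) [Fact p.Prime] [IsAlgClosed k] [CharP k p]
    (G : Type) [Group G] [Finite G] (H L : Subgroup G) (hHL : H ≤ L)
    (hG : (¬ (p ∣ Nat.card H) ∧ IsIndecomposableModule (MonoidAlgebra k G) (PermMod k H))) :
    (¬ (p ∣ Nat.card (H.subgroupOf L)) ∧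
      IsIndecomposableModule (MonoidAlgebra k L) (PermMod k (H.subgroupOf L))) := by
  obtain ⟨hp, _, hind⟩ := hG
  refine ⟨?_, ?_, ?_⟩
  · rw [Nat.card_congr (Subgroup.subgroupOfEquivOfLe hHL).toEquiv]
    exact hp
  · show Nontrivial (MonoidAlgebra k (L ⧸ H.subgroupOf L))
    infer_instance
  · intro N N' hc
    by_contra hcon
    push_neg at hcon
    obtain ⟨hN, hN'⟩ := hcon
    have hcompl : IsCompl (indSub N) (indSub N') :=
      isCompl_iff.mpr ⟨disjoint_iff.mpr (indSub_inf_eq_bot (disjoint_iff.mp hc.disjoint)),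
        codisjoint_iff.mpr (indSub_sup_eq_top hHL (codisjoint_iff.mp hc.codisjoint))⟩
    rcases hind _ _ hcompl with hb | hb
    · exact indSub_ne_bot hHL hN hb
    · exact indSub_ne_bot hHL hN' hb

/-- If `H ≤ L ≤ G` and `G` has property `(I_p)` with respect to `H`, then `L` has property
`(I_p)` with respect to `H`. -/
theorem stmt2 (k : Type) [Field k] (p : ℕ) [Fact p.Prime] [IsAlgClosed k] [CharP k p]
    (G : Type) [Group G] [Finite G] (H L : Subgroup G) (hHL : H ≤ L)
    (hG : HasIp k p H) :
    HasIp k p (H.subgroupOf L) :=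
  stmt2' k p G H L hHL hG
end
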